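/- Let Γ be invertible, Σ, S₁, S₂ symmetric positive semidefinite, Λ₁, Λ₂ compatible matrices, and assume the matrices ΛₖSₖΛₖᵀ are positive semidefinite. For two independent secondary outcomes (cross terms S_{h₁h₂} = 0), the aggregating variance V_agg = Γ⁻¹(Σ − Λ₁S₁Λ₁ᵀ − Λ₂S₂Λ₂ᵀ)(Γᵀ)⁻¹ satisfies V_agg ⪯ V_ave := Γ⁻¹(Σ − (2ω₁−ω₁²)Λ₁S₁Λ₁ᵀ − (2ω₂−ω₂²)Λ₂S₂Λ₂ᵀ)(Γᵀ)⁻¹ in the Loewner order, for any ω₁, ω₂ ≥ 0 with ω₁ + ω₂ = 1. -/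

import Mathlib

open Matrix

lemma psd_smul {m : ℕ} {A : Matrix (Fin m) (Fin m) ℝ} (hA : A.PosSemidef)
    {c : ℝ} (hc : 0 ≤ c) : (c • A).PosSemidef := by
  refine ⟨by unfold Matrix.IsHermitian; rw [conjTranspose_smul]; rw [show Aᴴ = A from hA.1, star_trivial], fun x => ?_⟩
  exact (hA.smul hc).2 x

theorem stmt_12 {n q₁ q₂ : ℕ}
    (Γ Sig : Matrix (Fin n) (Fin n) ℝ) (hΓ : IsUnit Γ.det) (hSig : Sig.PosSemidef)
    (Λ₁ : Matrix (Fin n) (Fin q₁) ℝ) (Λ₂ : Matrix (Fin n) (Fin q₂) ℝ)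
    (S₁ : Matrix (Fin q₁) (Fin q₁) ℝ) (S₂ : Matrix (Fin q₂) (Fin q₂) ℝ)
    (hS₁ : S₁.PosSemidef) (hS₂ : S₂.PosSemidef)
    (hΛ₁ : (Λ₁ * S₁ * Λ₁ᵀ).PosSemidef) (hΛ₂ : (Λ₂ * S₂ * Λ₂ᵀ).PosSemidef)
    (ω₁ ω₂ : ℝ) (h1 : 0 ≤ ω₁) (h2 : 0 ≤ ω₂) (hsum : ω₁ + ω₂ = 1) :
    (Γ⁻¹ * (Sig - (2 * ω₁ - ω₁ ^ 2) • (Λ₁ * S₁ * Λ₁ᵀ)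
        - (2 * ω₂ - ω₂ ^ 2) • (Λ₂ * S₂ * Λ₂ᵀ)) * (Γᵀ)⁻¹
      - Γ⁻¹ * (Sig - Λ₁ * S₁ * Λ₁ᵀ - Λ₂ * S₂ * Λ₂ᵀ) * (Γᵀ)⁻¹).PosSemidef := by
  have key : (Γ⁻¹ * (Sig - (2 * ω₁ - ω₁ ^ 2) • (Λ₁ * S₁ * Λ₁ᵀ)
        - (2 * ω₂ - ω₂ ^ 2) • (Λ₂ * S₂ * Λ₂ᵀ)) * (Γᵀ)⁻¹
      - Γ⁻¹ * (Sig - Λ₁ * S₁ * Λ₁ᵀ - Λ₂ * S₂ * Λ₂ᵀ) * (Γᵀ)⁻¹)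
      = Γ⁻¹ * ((1 - ω₁) ^ 2 • (Λ₁ * S₁ * Λ₁ᵀ) + (1 - ω₂) ^ 2 • (Λ₂ * S₂ * Λ₂ᵀ)) * (Γ⁻¹)ᴴ := by
    rw [conjTranspose_nonsing_inv]
    simp only [conjTranspose_eq_transpose_of_trivial]
    rw [← Matrix.sub_mul, ← Matrix.mul_sub]
    congr 2
    rw [sub_sub_sub_comm, sub_sub]
    module
  rw [key]
  exact (((psd_smul hΛ₁ (sq_nonneg _)).add (psd_smul hΛ₂ (sq_nonneg _))).mul_mul_conjTranspose_same _)
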